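/- Let F ∈ B_c and u(x,t) = ∫_ℝ F(x−ξ) Θ_t'(ξ) dξ for t > 0. Then the initial data F' is taken on in the Alexiewicz norm: sup_{x<y} | ∫_x^y u(ξ,t) dξ − (F(y) − F(x)) | → 0 as t → 0⁺. -/

import Mathlib

open MeasureTheory Filter Topology

/-- The Gauss–Weierstrass heat kernel `Θ_t(x) = (4πt)^(−1/2) exp(−x²/(4t))` for `t > 0`. -/
noncomputable def heatK (t x : ℝ) : ℝ :=
  (Real.sqrt (4 * Real.pi * t))⁻¹ * Real.exp (-x ^ 2 / (4 * t))

/-- Spatial derivative of the heat kernel: `Θ_t'(ξ) = −ξ Θ_t(ξ)/(2t)`. -/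
noncomputable def heatK' (t x : ℝ) : ℝ := -x * heatK t x / (2 * t)

/-- `F ∈ B_c`: continuous, vanishing at `−∞`, with a finite limit at `+∞`. -/
def memBc (F : ℝ → ℝ) : Prop :=
  Continuous F ∧ Tendsto F atBot (nhds (0 : ℝ)) ∧ ∃ L : ℝ, Tendsto F atTop (nhds L)

/-- Heat convolution `u(x,t) = ∫ F(x−ξ) Θ_t'(ξ) dξ` of the distribution `f = F'`. -/
noncomputable def heatConv (F : ℝ → ℝ) (t x : ℝ) : ℝ := ∫ ξ : ℝ, F (x - ξ) * heatK' t ξ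

lemma fourPiT_pos {t : ℝ} (ht : 0 < t) : 0 < 4 * Real.pi * t := by positivity

lemma heatK_eq (t : ℝ) : heatK t = fun x =>
    (Real.sqrt (4 * Real.pi * t))⁻¹ * Real.exp (-(1/(4*t)) * x ^ 2) := by
  funext x; unfold heatK; ring_nf

lemma hk_cont (t : ℝ) : Continuous (heatK t) := by
  unfold heatK; continuity

lemma hk_nonneg (t x : ℝ) : 0 ≤ heatK t x :=
  mul_nonneg (inv_nonneg.2 (Real.sqrt_nonneg _)) (Real.exp_pos _).le

lemma hk_integrable {t : ℝ} (ht : 0 < t) : Integrable (heatK t) := by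
  rw [heatK_eq]
  exact (integrable_exp_neg_mul_sq (by positivity : (0:ℝ) < 1/(4*t))).const_mul _

lemma hk_integral {t : ℝ} (ht : 0 < t) : ∫ x, heatK t x = 1 := by
  rw [heatK_eq]
  rw [integral_const_mul, integral_gaussian]
  have h1 : Real.pi / (1/(4*t)) = 4 * Real.pi * t := by
    field_simp
  rw [h1]
  exact inv_mul_cancel₀ (Real.sqrt_ne_zero'.2 (fourPiT_pos ht))

lemma hk_hasDeriv {t : ℝ} (ht : 0 < t) (x : ℝ) : HasDerivAt (heatK t) (heatK' t x) x := by
  have h1 : HasDerivAt (fun x : ℝ => -x ^ 2 / (4 * t)) (-(2 * x) / (4 * t)) x := by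
    simpa using ((hasDerivAt_pow 2 x).neg.div_const (4 * t))
  have h2 := (h1.exp.const_mul ((Real.sqrt (4 * Real.pi * t))⁻¹))
  refine h2.congr_deriv ?_
  unfold heatK' heatK
  field_simp
  ring

lemma hk'_integrable {t : ℝ} (ht : 0 < t) : Integrable (heatK' t) := by
  have : heatK' t = fun x =>
      (-(Real.sqrt (4 * Real.pi * t))⁻¹ / (2*t)) * (x * Real.exp (-(1/(4*t)) * x ^ 2)) := by
    funext x; unfold heatK' heatK; field_simp
  rw [this]
  exact (integrable_mul_exp_neg_mul_sq (by positivity : (0:ℝ) < 1/(4*t))).const_mul _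

lemma hk_tendsto_cocompact {t : ℝ} (ht : 0 < t) :
    Tendsto (heatK t) (cocompact ℝ) (𝓝 0) := by
  rw [heatK_eq]
  have h1 : Tendsto (fun x : ℝ => -(1/(4*t)) * x ^ 2) (cocompact ℝ) atBot := by
    have hsq_bot : Tendsto (fun x : ℝ => x ^ 2) atBot atTop := by
      have h : Tendsto (Neg.neg : ℝ → ℝ) atBot atTop := tendsto_neg_atBot_atTop
      have := (tendsto_pow_atTop (n := 2) (by norm_num)).comp h
      simpa [Function.comp_def] using this
    have hsq_top : Tendsto (fun x : ℝ => x ^ 2) atTop atTop :=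
      tendsto_pow_atTop (n := 2) (by norm_num)
    have hneg : -(1/(4*t)) < 0 := neg_lt_zero.mpr (by positivity)
    rw [cocompact_eq_atBot_atTop, tendsto_sup]
    exact ⟨hsq_bot.const_mul_atTop_of_neg hneg, hsq_top.const_mul_atTop_of_neg hneg⟩
  have := ((Real.tendsto_exp_atBot.comp h1).const_mul ((Real.sqrt (4 * Real.pi * t))⁻¹))
  simpa using this


noncomputable def Sfun : ℝ → ℝ := fun x => min 1 (max x 0)

lemma Sfun_uc : UniformContinuous Sfun := by
  have h : LipschitzWith 1 (fun x : ℝ => min (max x 0) 1) :=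
    (LipschitzWith.id.max_const 0).min_const 1
  have : Sfun = fun x : ℝ => min (max x 0) 1 := by
    funext x; simp [Sfun, min_comm]
  rw [this]
  exact h.uniformContinuous

lemma Sfun_abs_le (x : ℝ) : |Sfun x| ≤ 1 := by
  rw [abs_le]
  constructor
  · have : (0:ℝ) ≤ min 1 (max x 0) := le_min one_pos.le (le_max_right _ _)
    simpa [Sfun] using this.trans' (by norm_num)
  · exact min_le_left _ _

lemma Sfun_atTop : Tendsto Sfun atTop (𝓝 1) := by
  apply Tendsto.congr' _ tendsto_const_nhds
  filter_upwards [eventually_ge_atTop (1:ℝ)] with x hx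
  simp [Sfun, min_eq_left, le_max_iff, hx]

lemma Sfun_atBot : Tendsto Sfun atBot (𝓝 0) := by
  apply Tendsto.congr' _ tendsto_const_nhds
  filter_upwards [eventually_le_atBot (0:ℝ)] with x hx
  simp [Sfun, max_eq_right hx]

lemma memBc_uc {F : ℝ → ℝ} (hF : memBc F) : UniformContinuous F := by
  obtain ⟨hc, hbot, L, htop⟩ := hF
  set G : ℝ → ℝ := fun x => F x - L * Sfun x with hG
  have hGc : Continuous G := hc.sub (continuous_const.mul Sfun_uc.continuous)
  have hGco : Tendsto G (cocompact ℝ) (𝓝 0) := by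
    rw [cocompact_eq_atBot_atTop, tendsto_sup]
    constructor
    · simpa using hbot.sub ((Sfun_atBot).const_mul L)
    · simpa using htop.sub ((Sfun_atTop).const_mul L)
  have hGuc : UniformContinuous G := hGc.uniformContinuous_of_tendsto_cocompact hGco
  have : F = fun x => G x + L * Sfun x := by funext x; simp [hG]
  rw [this]
  exact hGuc.add (Sfun_uc.const_smul L)

lemma memBc_bdd {F : ℝ → ℝ} (hF : memBc F) : ∃ C : ℝ, 1 ≤ C ∧ ∀ x, |F x| ≤ C := by
  obtain ⟨hc, hbot, L, htop⟩ := hF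
  set G : ℝ → ℝ := fun x => F x - L * Sfun x with hG
  have hGc : Continuous G := hc.sub (continuous_const.mul Sfun_uc.continuous)
  have hGco : Tendsto G (cocompact ℝ) (𝓝 0) := by
    rw [cocompact_eq_atBot_atTop, tendsto_sup]
    constructor
    · simpa using hbot.sub ((Sfun_atBot).const_mul L)
    · simpa using htop.sub ((Sfun_atTop).const_mul L)
  have h1 : ∀ᶠ x in cocompact ℝ, |G x| ≤ 1 := by
    have := Metric.tendsto_nhds.mp hGco 1 one_pos
    filter_upwards [this] with x hx
    simpa [Real.dist_eq] using hx.le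
  obtain ⟨K, hK, hKs⟩ := mem_cocompact.mp h1
  obtain ⟨C₀, hC₀⟩ := hK.exists_bound_of_continuousOn hGc.continuousOn
  refine ⟨max C₀ 1 + |L|, le_add_of_le_of_nonneg (le_max_right _ _) (abs_nonneg _), fun x => ?_⟩
  have hGx : |G x| ≤ max C₀ 1 := by
    by_cases hx : x ∈ K
    · exact le_max_of_le_left (by simpa using hC₀ x hx)
    · exact le_max_of_le_right (hKs hx)
  have : |F x| ≤ |G x| + |L * Sfun x| := by
    have : F x = G x + L * Sfun x := by simp [hG]
    rw [this]; exact abs_add_le _ _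
  refine this.trans (add_le_add hGx ?_)
  rw [abs_mul]
  calc |L| * |Sfun x| ≤ |L| * 1 := by
        exact mul_le_mul_of_nonneg_left (Sfun_abs_le x) (abs_nonneg L)
    _ = |L| := mul_one _



lemma hk'_cont {t : ℝ} (ht : 0 < t) : Continuous (heatK' t) := by
  unfold heatK'
  exact ((continuous_neg.mul (hk_cont t))).div_const _

section Repr

variable {F : ℝ → ℝ} (hFc : Continuous F) {C : ℝ} (hC0 : 0 ≤ C) (hC : ∀ x, |F x| ≤ C)
variable {t : ℝ} (ht : 0 < t)

/-- Antiderivative of `F`. -/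
noncomputable def Phi (F : ℝ → ℝ) (c : ℝ) : ℝ := ∫ s in (0:ℝ)..c, F s

include hFc in
lemma Phi_hasDeriv (c : ℝ) : HasDerivAt (Phi F) (F c) c :=
  intervalIntegral.integral_hasDerivAt_right (hFc.intervalIntegrable _ _)
    (hFc.stronglyMeasurableAtFilter _ _) hFc.continuousAt

include hFc in
lemma Phi_sub_eq (a b : ℝ) : Phi F b - Phi F a = ∫ s in a..b, F s := by
  unfold Phi
  exact intervalIntegral.integral_interval_sub_left (hFc.intervalIntegrable _ _)
    (hFc.intervalIntegrable _ _)

include hFc hC0 hC ht in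
lemma key_repr {x y : ℝ} (hxy : x ≤ y) :
    ∫ ξ in x..y, heatConv F t ξ = ∫ η, (F (y - η) - F (x - η)) * heatK t η := by
  set μ := volume.restrict (Set.Ioc x y) with hμ
  haveI : IsFiniteMeasure μ := ⟨by
    rw [hμ, Measure.restrict_apply_univ]; exact measure_Ioc_lt_top⟩
  -- the function u and its derivative
  set u : ℝ → ℝ := fun η => Phi F (y - η) - Phi F (x - η) with hu_def
  set u' : ℝ → ℝ := fun η => F (x - η) - F (y - η) with hu'_def
  have hu : ∀ η, HasDerivAt u (u' η) η := by
    intro η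
    have h1 : HasDerivAt (fun η : ℝ => Phi F (y - η)) (-F (y - η)) η := by
      have := (Phi_hasDeriv hFc (y - η)).comp η ((hasDerivAt_id η).const_sub y)
      simpa [Function.comp_def] using this
    have h2 : HasDerivAt (fun η : ℝ => Phi F (x - η)) (-F (x - η)) η := by
      have := (Phi_hasDeriv hFc (x - η)).comp η ((hasDerivAt_id η).const_sub x)
      simpa [Function.comp_def] using this
    have h := h1.sub h2
    refine h.congr_deriv ?_
    rw [hu'_def]; ring
  have hu_cont : Continuous u := by
    rw [continuous_iff_continuousAt]; exact fun η => (hu η).continuousAt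
  have hu_bdd : ∀ η, |u η| ≤ C * (y - x) := by
    intro η
    rw [hu_def]
    simp only
    rw [Phi_sub_eq hFc]
    have := intervalIntegral.norm_integral_le_of_norm_le_const
      (C := C) (a := x - η) (b := y - η) (f := F) (fun s _ => hC s)
    calc |∫ s in (x-η)..(y-η), F s| ≤ C * |(y - η) - (x - η)| := this
      _ = C * (y - x) := by rw [abs_of_nonneg (by linarith)]; ring_nf
  have hu'_bdd : ∀ η, |u' η| ≤ 2 * C := by
    intro η
    rw [hu'_def]
    calc |F (x - η) - F (y - η)| ≤ |F (x - η)| + |F (y - η)| := abs_sub _ _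
      _ ≤ C + C := add_le_add (hC _) (hC _)
      _ = 2 * C := by ring
  -- Fubini
  have hcont2 : Continuous (fun z : ℝ × ℝ => F (z.1 - z.2) * heatK' t z.2) :=
    (hFc.comp (continuous_fst.sub continuous_snd)).mul ((hk'_cont ht).comp continuous_snd)
  have hprod : Integrable (fun z : ℝ × ℝ => F (z.1 - z.2) * heatK' t z.2) (μ.prod volume) := by
    apply Integrable.mono' ((integrable_const C).mul_prod (hk'_integrable ht).abs)
    · exact hcont2.aestronglyMeasurable
    · refine Filter.Eventually.of_forall fun z => ?_
      rw [Real.norm_eq_abs, abs_mul]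
      exact mul_le_mul_of_nonneg_right (hC _) (abs_nonneg _)
  have swap := MeasureTheory.integral_integral_swap (f := fun ξ η => F (ξ - η) * heatK' t η)
    (μ := μ) (ν := volume) hprod
  -- identify LHS
  have lhs_eq : ∫ ξ in x..y, heatConv F t ξ = ∫ η, (∫ ξ in x..y, F (ξ - η)) * heatK' t η := by
    rw [intervalIntegral.integral_of_le hxy]
    calc ∫ ξ in Set.Ioc x y, heatConv F t ξ
        = ∫ ξ, (∫ η, F (ξ - η) * heatK' t η) ∂μ := rfl
      _ = ∫ η, ∫ ξ, F (ξ - η) * heatK' t η ∂μ := swap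
      _ = ∫ η, (∫ ξ in x..y, F (ξ - η)) * heatK' t η := by
          congr 1; funext η
          rw [MeasureTheory.integral_mul_const, intervalIntegral.integral_of_le hxy]
  rw [lhs_eq]
  -- rewrite inner integral via Phi
  have inner_eq : ∀ η, (∫ ξ in x..y, F (ξ - η)) = u η := by
    intro η
    rw [intervalIntegral.integral_comp_sub_right (fun s => F s) η, hu_def]
    simp only
    rw [Phi_sub_eq hFc]
  have lhs_eq2 : ∫ η, (∫ ξ in x..y, F (ξ - η)) * heatK' t η = ∫ η, u η * heatK' t η := by
    congr 1; funext η; rw [inner_eq]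
  rw [lhs_eq2]
  -- integration by parts
  have huv' : Integrable (u * heatK' t) := by
    apply Integrable.mono' (((hk'_integrable ht).norm.const_mul (C * (y - x))))
    · exact (hu_cont.mul (hk'_cont ht)).aestronglyMeasurable
    · refine Filter.Eventually.of_forall fun η => ?_
      rw [Pi.mul_apply, Real.norm_eq_abs, abs_mul]
      exact mul_le_mul_of_nonneg_right (hu_bdd η) (abs_nonneg _)
  have hu'v : Integrable (u' * heatK t) := by
    apply Integrable.mono' (((hk_integrable ht).norm.const_mul (2 * C)))
    · exact (((hFc.comp (continuous_const.sub continuous_id)).sub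
        (hFc.comp (continuous_const.sub continuous_id))).mul (hk_cont t)).aestronglyMeasurable
    · refine Filter.Eventually.of_forall fun η => ?_
      rw [Pi.mul_apply, Real.norm_eq_abs, abs_mul]
      exact mul_le_mul_of_nonneg_right (hu'_bdd η) (abs_nonneg _)
  have hk_top : Tendsto (heatK t) atTop (𝓝 0) := by
    refine (hk_tendsto_cocompact ht).mono_left ?_
    rw [cocompact_eq_atBot_atTop]; exact le_sup_right
  have hk_bot : Tendsto (heatK t) atBot (𝓝 0) := by
    refine (hk_tendsto_cocompact ht).mono_left ?_
    rw [cocompact_eq_atBot_atTop]; exact le_sup_left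
  have habs : ∀ η, ‖(u * heatK t) η‖ ≤ (C * (y - x)) * |heatK t η| := by
    intro η
    rw [Pi.mul_apply, Real.norm_eq_abs, abs_mul]
    exact mul_le_mul_of_nonneg_right (hu_bdd η) (abs_nonneg _)
  have h_top : Tendsto (u * heatK t) atTop (𝓝 0) := by
    apply squeeze_zero_norm habs
    simpa using (hk_top.abs.const_mul (C * (y - x)))
  have h_bot : Tendsto (u * heatK t) atBot (𝓝 0) := by
    apply squeeze_zero_norm habs
    simpa using (hk_bot.abs.const_mul (C * (y - x)))
  have parts := MeasureTheory.integral_mul_deriv_eq_deriv_mul (fun η _ => hu η) (fun η _ => hk_hasDeriv ht η)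
    huv' hu'v h_bot h_top
  rw [parts]
  have heq : ∀ η, (F (y - η) - F (x - η)) * heatK t η = -(u' η * heatK t η) := by
    intro η; rw [hu'_def]; ring
  calc (0:ℝ) - 0 - ∫ η, u' η * heatK t η = ∫ η, -(u' η * heatK t η) := by
        rw [MeasureTheory.integral_neg]; ring
    _ = ∫ η, (F (y - η) - F (x - η)) * heatK t η := by
        congr 1; funext η; rw [heq]

include ht in
lemma mul_hk_integrable {g : ℝ → ℝ} (hg : Continuous g) {D : ℝ} (hD : ∀ η, |g η| ≤ D) :
    Integrable (fun η => g η * heatK t η) := by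
  apply Integrable.mono' ((hk_integrable ht).norm.const_mul D)
  · exact (hg.mul (hk_cont t)).aestronglyMeasurable
  · refine Filter.Eventually.of_forall fun η => ?_
    rw [Real.norm_eq_abs, abs_mul]
    exact mul_le_mul_of_nonneg_right (hD η) (abs_nonneg _)

include hFc hC0 hC ht in
lemma diff_formula {x y : ℝ} (hxy : x ≤ y) :
    (∫ ξ in x..y, heatConv F t ξ) - (F y - F x)
      = ∫ η, ((F (y - η) - F y) - (F (x - η) - F x)) * heatK t η := by
  have h1 : Integrable (fun η => (F (y - η) - F (x - η)) * heatK t η) := by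
    apply mul_hk_integrable ht
      ((hFc.comp (continuous_const.sub continuous_id)).sub
        (hFc.comp (continuous_const.sub continuous_id)))
      (D := 2 * C)
    intro η
    calc |F (y - η) - F (x - η)| ≤ |F (y - η)| + |F (x - η)| := abs_sub _ _
      _ ≤ C + C := add_le_add (hC _) (hC _)
      _ = 2 * C := by ring
  have h2 : Integrable (fun η => (F y - F x) * heatK t η) := (hk_integrable ht).const_mul _
  have h3 : F y - F x = ∫ η, (F y - F x) * heatK t η := by
    rw [MeasureTheory.integral_const_mul, hk_integral ht, mul_one]
  calc (∫ ξ in x..y, heatConv F t ξ) - (F y - F x)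
      = (∫ η, (F (y - η) - F (x - η)) * heatK t η) - ∫ η, (F y - F x) * heatK t η := by
        rw [key_repr hFc hC0 hC ht hxy, ← h3]
    _ = ∫ η, ((F (y - η) - F (x - η)) * heatK t η - (F y - F x) * heatK t η) := by
        rw [MeasureTheory.integral_sub h1 h2]
    _ = ∫ η, ((F (y - η) - F y) - (F (x - η) - F x)) * heatK t η := by
        congr 1; funext η; ring

include ht in
lemma hk_tail {δ : ℝ} (hδ : 0 < δ) :
    ∫ η, Set.indicator {η : ℝ | δ ≤ |η|} (heatK t) η
      ≤ Real.sqrt 2 * Real.exp (-δ^2 / (8*t)) := by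
  have hmeas : MeasurableSet {η : ℝ | δ ≤ |η|} :=
    (isClosed_le continuous_const continuous_abs).measurableSet
  have hind : Integrable (Set.indicator {η : ℝ | δ ≤ |η|} (heatK t)) :=
    (hk_integrable ht).indicator hmeas
  set h : ℝ → ℝ := fun η =>
    Real.exp (-δ^2/(8*t)) * ((Real.sqrt (4 * Real.pi * t))⁻¹ * Real.exp (-(1/(8*t)) * η^2))
    with hh
  have hint : Integrable h := by
    exact (((integrable_exp_neg_mul_sq (by positivity : (0:ℝ) < 1/(8*t))).const_mul
      _).const_mul _)
  have hle : ∀ η, Set.indicator {η : ℝ | δ ≤ |η|} (heatK t) η ≤ h η := by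
    intro η
    by_cases hη : η ∈ {η : ℝ | δ ≤ |η|}
    · rw [Set.indicator_of_mem hη]
      have hδη : δ^2 ≤ η^2 := by
        have := hη
        simp only [Set.mem_setOf_eq] at this
        calc δ^2 ≤ |η|^2 := pow_le_pow_left₀ hδ.le this 2
          _ = η^2 := sq_abs η
      have key : Real.exp (-η^2/(4*t)) ≤ Real.exp (-δ^2/(8*t)) * Real.exp (-(1/(8*t)) * η^2) := by
        rw [← Real.exp_add]
        apply Real.exp_le_exp.mpr
        have e1 : -η^2/(4*t) = -(2*η^2)/(8*t) := by ring
        have e2 : -δ^2/(8*t) + -(1/(8*t))*η^2 = -(δ^2 + η^2)/(8*t) := by ring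
        rw [e1, e2]
        gcongr
        linarith
      calc heatK t η = (Real.sqrt (4 * Real.pi * t))⁻¹ * Real.exp (-η^2/(4*t)) := rfl
        _ ≤ (Real.sqrt (4 * Real.pi * t))⁻¹
            * (Real.exp (-δ^2/(8*t)) * Real.exp (-(1/(8*t)) * η^2)) := by
            apply mul_le_mul_of_nonneg_left key (by positivity)
        _ = h η := by rw [hh]; ring
    · rw [Set.indicator_of_notMem hη, hh]
      positivity
  calc ∫ η, Set.indicator {η : ℝ | δ ≤ |η|} (heatK t) η ≤ ∫ η, h η :=
        integral_mono hind hint hle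
    _ = Real.sqrt 2 * Real.exp (-δ^2 / (8*t)) := by
        rw [hh]
        rw [MeasureTheory.integral_const_mul, MeasureTheory.integral_const_mul, integral_gaussian]
        have h1 : Real.pi / (1/(8*t)) = 2 * (4 * Real.pi * t) := by field_simp; ring
        rw [h1, Real.sqrt_mul (by norm_num : (0:ℝ) ≤ 2)]
        have hne : Real.sqrt (4*Real.pi*t) ≠ 0 := Real.sqrt_ne_zero'.2 (fourPiT_pos ht)
        field_simp

end Repr

/-- The initial data `F'` is taken on in the Alexiewicz norm:
`sup_{x<y} |∫_x^y u(ξ,t) dξ − (F(y) − F(x))| → 0` as `t → 0⁺`. -/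
theorem stmt4 (F : ℝ → ℝ) (hF : memBc F) :
    Tendsto (fun t : ℝ => sSup {r : ℝ | ∃ x y : ℝ, x < y ∧
        r = |(∫ ξ in x..y, heatConv F t ξ) - (F y - F x)|})
      (nhdsWithin 0 (Set.Ioi 0)) (nhds 0) := by
  obtain ⟨C, hC1, hC⟩ := memBc_bdd hF
  have hC0 : (0:ℝ) ≤ C := le_trans zero_le_one hC1
  have hFc : Continuous F := hF.1
  have hUC := memBc_uc hF
  rw [Metric.tendsto_nhds]
  intro ε hε
  obtain ⟨δ, hδ, hδ'⟩ := Metric.uniformContinuous_iff.mp hUC (ε/8) (by positivity)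
  -- the tail term tends to 0
  have htail : Tendsto (fun t : ℝ => (4*C) * (Real.sqrt 2 * Real.exp (-δ^2/(8*t))))
      (nhdsWithin 0 (Set.Ioi 0)) (𝓝 0) := by
    have h1 : Tendsto (fun t : ℝ => -δ^2/(8*t)) (nhdsWithin 0 (Set.Ioi 0)) atBot := by
      have h2 : Tendsto (fun t : ℝ => t⁻¹) (nhdsWithin 0 (Set.Ioi 0)) atTop :=
        tendsto_inv_nhdsGT_zero
      have hrneg : -δ^2/8 < (0:ℝ) := by
        have : (0:ℝ) < δ^2 := by positivity
        linarith
      have h3 := h2.const_mul_atTop_of_neg hrneg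
      refine h3.congr fun t => ?_
      field_simp
    have := ((Real.tendsto_exp_atBot.comp h1).const_mul (Real.sqrt 2)).const_mul (4*C)
    simpa using this
  have hev : ∀ᶠ t in nhdsWithin 0 (Set.Ioi 0),
      (4*C) * (Real.sqrt 2 * Real.exp (-δ^2/(8*t))) < ε/4 := by
    exact htail.eventually_lt_const (show (0:ℝ) < ε/4 by positivity)
  filter_upwards [hev, self_mem_nhdsWithin] with t h2 ht'
  have ht : 0 < t := ht'
  set A := {r : ℝ | ∃ x y : ℝ, x < y ∧
      r = |(∫ ξ in x..y, heatConv F t ξ) - (F y - F x)|} with hA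
  have hmeasδ : MeasurableSet {η : ℝ | δ ≤ |η|} :=
    (isClosed_le continuous_const continuous_abs).measurableSet
  -- key bound for every element of A
  have hbd : ∀ r ∈ A, r ≤ ε/4 + (4*C) * (Real.sqrt 2 * Real.exp (-δ^2/(8*t))) := by
    rintro r ⟨x, y, hxy, rfl⟩
    rw [diff_formula hFc hC0 hC ht hxy.le]
    set d : ℝ → ℝ := fun η => (F (y - η) - F y) - (F (x - η) - F x) with hd
    have hdcont : Continuous d := by
      rw [hd]
      exact ((hFc.comp (continuous_const.sub continuous_id)).sub continuous_const).sub
        ((hFc.comp (continuous_const.sub continuous_id)).sub continuous_const)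
    have hdbd : ∀ η, |d η| ≤ 4*C := by
      intro η
      rw [hd]
      have b1 : |F (y - η) - F y| ≤ 2*C := by
        calc |F (y - η) - F y| ≤ |F (y - η)| + |F y| := abs_sub _ _
          _ ≤ C + C := add_le_add (hC _) (hC _)
          _ = 2*C := by ring
      have b2 : |F (x - η) - F x| ≤ 2*C := by
        calc |F (x - η) - F x| ≤ |F (x - η)| + |F x| := abs_sub _ _
          _ ≤ C + C := add_le_add (hC _) (hC _)
          _ = 2*C := by ring
      calc |(F (y - η) - F y) - (F (x - η) - F x)|
          ≤ |F (y - η) - F y| + |F (x - η) - F x| := abs_sub _ _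
        _ ≤ 2*C + 2*C := add_le_add b1 b2
        _ = 4*C := by ring
    have hdInt : Integrable (fun η => d η * heatK t η) :=
      mul_hk_integrable ht hdcont hdbd
    set G : ℝ → ℝ := fun η =>
      (ε/4) * heatK t η + (4*C) * Set.indicator {η : ℝ | δ ≤ |η|} (heatK t) η with hG
    have hGint : Integrable G :=
      ((hk_integrable ht).const_mul _).add
        (((hk_integrable ht).indicator hmeasδ).const_mul _)
    have hptwise : ∀ η, ‖d η * heatK t η‖ ≤ G η := by
      intro η
      rw [Real.norm_eq_abs, abs_mul, abs_of_nonneg (hk_nonneg t η), hG]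
      show |d η| * heatK t η ≤ ε / 4 * heatK t η
        + 4 * C * Set.indicator {η : ℝ | δ ≤ |η|} (heatK t) η
      by_cases hη : η ∈ {η : ℝ | δ ≤ |η|}
      · rw [Set.indicator_of_mem hη]
        have : |d η| * heatK t η ≤ (4*C) * heatK t η :=
          mul_le_mul_of_nonneg_right (hdbd η) (hk_nonneg t η)
        have hpos : 0 ≤ (ε/4) * heatK t η := mul_nonneg (by positivity) (hk_nonneg t η)
        simpa using le_add_of_nonneg_of_le hpos this
      · rw [Set.indicator_of_notMem hη]
        simp only [Set.mem_setOf_eq, not_le] at hη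
        have b1 : |F (y - η) - F y| < ε/8 := by
          have : dist (y - η) y < δ := by
            rw [Real.dist_eq]
            simpa using hη
          simpa [Real.dist_eq] using hδ' this
        have b2 : |F (x - η) - F x| < ε/8 := by
          have : dist (x - η) x < δ := by
            rw [Real.dist_eq]
            simpa using hη
          simpa [Real.dist_eq] using hδ' this
        have hd4 : |d η| ≤ ε/4 := by
          rw [hd]
          calc |(F (y - η) - F y) - (F (x - η) - F x)|
              ≤ |F (y - η) - F y| + |F (x - η) - F x| := abs_sub _ _
            _ ≤ ε/8 + ε/8 := add_le_add b1.le b2.le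
            _ = ε/4 := by ring
        have := mul_le_mul_of_nonneg_right hd4 (hk_nonneg t η)
        simpa using this
    calc |∫ η, d η * heatK t η| = ‖∫ η, d η * heatK t η‖ := (Real.norm_eq_abs _).symm
      _ ≤ ∫ η, ‖d η * heatK t η‖ := norm_integral_le_integral_norm _
      _ ≤ ∫ η, G η := integral_mono hdInt.norm hGint hptwise
      _ = ε/4 + (4*C) * ∫ η, Set.indicator {η : ℝ | δ ≤ |η|} (heatK t) η := by
          rw [hG, MeasureTheory.integral_add ((hk_integrable ht).const_mul _)
            (((hk_integrable ht).indicator hmeasδ).const_mul _),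
            MeasureTheory.integral_const_mul, MeasureTheory.integral_const_mul,
            hk_integral ht, mul_one]
      _ ≤ ε/4 + (4*C) * (Real.sqrt 2 * Real.exp (-δ^2/(8*t))) := by
          have := hk_tail ht hδ
          have h4C : (0:ℝ) ≤ 4*C := by positivity
          linarith [mul_le_mul_of_nonneg_left this h4C]
  have hne : A.Nonempty := ⟨_, 0, 1, zero_lt_one, rfl⟩
  have hBdd : BddAbove A := ⟨_, fun r hr => hbd r hr⟩
  have hsup_le : sSup A ≤ ε/4 + (4*C) * (Real.sqrt 2 * Real.exp (-δ^2/(8*t))) :=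
    csSup_le hne hbd
  have hsup_nonneg : 0 ≤ sSup A := by
    obtain ⟨r, hr⟩ := hne
    obtain ⟨x, y, hxy, hre⟩ := hr
    have : 0 ≤ r := hre ▸ abs_nonneg _
    exact this.trans (le_csSup hBdd ⟨x, y, hxy, hre⟩)
  rw [Real.dist_eq, sub_zero, abs_of_nonneg hsup_nonneg]
  linarith
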